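/- Let (Br_j)_{j≥0} be a sequence of finite nonempty sets with Br_0 = {v_0} a singleton and let {A^(j)} be a projective matrix system over (Br_j) such that A^(j)_{v,w} > 0 for all j ≥ 1 and all (v,w) ∈ Br_{j-1} × Br_j. If ∑_{j=1}^∞ √(φ(A^(j))) = ∞, then the map lim_j A^(j) ∋ (ψ^j)_{j≥0} ↦ ψ^0 is an affine homeomorphism from lim_j A^(j) onto [0,∞). -/

import Mathlib

open scoped BigOperators
noncomputable section

open Classical in
/-- The matrix product `(A^(1) A^(2) ⋯ A^(k))_{v,w}`; here `A n` is the matrix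
`A^(n+1)` of a projective matrix system, from level `n` to level `n+1`. -/
def pathMat {L : ℕ → Type} [∀ n, Fintype (L n)]
    (A : ∀ n, L n → L (n+1) → ℝ) : ∀ k, L 0 → L k → ℝ
  | 0, v, w => if v = w then 1 else 0
  | (k+1), v, w => ∑ u, pathMat A k v u * A k u w

/-- The inverse limit `lim_j A^(j)` of a projective matrix system. -/
def InvLimit {L : ℕ → Type} [∀ n, Fintype (L n)]
    (A : ∀ n, L n → L (n+1) → ℝ) : Set (∀ n, L n → ℝ) :=
  {ψ | (∀ n v, 0 ≤ ψ n v) ∧ ∀ n v, ψ n v = ∑ w, A n v w * ψ (n+1) w}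

/-- A projective matrix system: nonnegative entries and
`(A^(1) ⋯ A^(k))_{v₀,w} ≠ 0` for all `k` and `w`. -/
def IsProjSystem {L : ℕ → Type} [∀ n, Fintype (L n)] (v0 : L 0)
    (A : ∀ n, L n → L (n+1) → ℝ) : Prop :=
  (∀ n v w, 0 ≤ A n v w) ∧ ∀ k (w : L k), pathMat A k v0 w ≠ 0


/-- `φ(B)` for a strictly positive matrix `B`:
the minimum of `B_{x,y} B_{x',y'} / (B_{x',y} B_{x,y'})`. -/
def phi {X Y : Type} [Fintype X] [Fintype Y] (B : X → Y → ℝ) : ℝ :=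
  ⨅ q : (X × X) × Y × Y, B q.1.1 q.2.1 * B q.1.2 q.2.2 / (B q.1.2 q.2.1 * B q.1.1 q.2.2)


set_option linter.unusedSectionVars false
set_option linter.unusedVariables false


lemma core_ineq (m M c A1 A2 B1 B2 g : ℝ) (hm : 0 < m) (hmM : m ≤ M) (hc : 1 ≤ c)
    (hA1 : 0 ≤ A1) (hA2 : 0 ≤ A2) (hB1 : 0 ≤ B1) (hB2 : 0 ≤ B2)
    (hg : 0 ≤ g) (hg2 : g^2 = M*c*m) (hcon : A1*B2 ≤ c*(A2*B1)) :
    (M + m*c + 2*g) * ((M*A1 + m*A2)*(B1+B2)) ≤ (M*c + m + 2*g) * ((M*B1 + m*B2)*(A1+A2)) := by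
  set C1 : ℝ := (M-m)*(M*(c-1)*B1 - (M+m+2*g)*B2) with hC1def
  set C2 : ℝ := (M-m)*(B1*(c*(M+m)+2*g) + B2*m*(c-1)) with hC2def
  have key : (M*c + m + 2*g) * ((M*B1 + m*B2)*(A1+A2)) - (M + m*c + 2*g) * ((M*A1 + m*A2)*(B1+B2))
      = A1 * C1 + A2 * C2 := by rw [hC1def, hC2def]; ring
  have hMpos : 0 < M := lt_of_lt_of_le hm hmM
  have hC2 : 0 ≤ C2 := by
    apply mul_nonneg (by linarith)
    have h1 : 0 ≤ B1*(c*(M+m)+2*g) := by positivity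
    nlinarith [mul_nonneg hB2 (mul_nonneg hm.le (sub_nonneg.2 hc))]
  rcases le_or_gt 0 C1 with hC1 | hC1
  · nlinarith [mul_nonneg hA1 hC1, mul_nonneg hA2 hC2]
  · have hB2pos : 0 < B2 := by
      rcases eq_or_lt_of_le hB2 with h | h
      · exfalso
        rw [hC1def, ← h] at hC1
        nlinarith [mul_nonneg (mul_nonneg (sub_nonneg.2 hmM) (sub_nonneg.2 hc)) (mul_nonneg hMpos.le hB1)]
      · exact h
    have hsq : 0 ≤ M*c*B1^2 - 2*g*B1*B2 + m*B2^2 := by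
      nlinarith [sq_nonneg (M*c*B1 - g*B2), mul_pos hMpos (lt_of_lt_of_le one_pos hc)]
    have hkey2 : c*B1*C1 + B2*C2 = (M-m)*(c-1)*(M*c*B1^2 - 2*g*B1*B2 + m*B2^2) := by
      rw [hC1def, hC2def]; ring
    have h1 : c*(A2*B1)*C1 ≤ (A1*B2)*C1 := mul_le_mul_of_nonpos_right hcon hC1.le
    have h2 : 0 ≤ A2*((M-m)*(c-1)*(M*c*B1^2 - 2*g*B1*B2 + m*B2^2)) := by
      apply mul_nonneg hA2
      apply mul_nonneg (mul_nonneg (by linarith) (by linarith)) hsq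
    have h3 : 0 ≤ B2 * (A1 * C1 + A2 * C2) := by nlinarith
    have h4 : 0 ≤ A1 * C1 + A2 * C2 := nonneg_of_mul_nonneg_right h3 hB2pos
    linarith

section phi

variable {X Y : Type} [Fintype X] [Fintype Y] [Nonempty X] [Nonempty Y]
  (B : X → Y → ℝ) (hB : ∀ x y, 0 < B x y)

lemma phi_le (x x' : X) (y y' : Y) :
    phi B ≤ B x y * B x' y' / (B x' y * B x y') := by
  apply ciInf_le _ ((x,x'),(y,y'))
  apply Set.Finite.bddBelow (Set.finite_range _)

include hB

lemma phi_pos : 0 < phi B := by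
  obtain ⟨q, hq⟩ := exists_eq_ciInf_of_finite
    (f := fun q : (X × X) × Y × Y => B q.1.1 q.2.1 * B q.1.2 q.2.2 / (B q.1.2 q.2.1 * B q.1.1 q.2.2))
  rw [phi, ← hq]
  exact div_pos (mul_pos (hB _ _) (hB _ _)) (mul_pos (hB _ _) (hB _ _))

lemma phi_le_one : phi B ≤ 1 := by
  inhabit X; inhabit Y
  have := phi_le B default default (default : Y) default
  rwa [div_self (ne_of_gt (mul_pos (hB _ _) (hB _ _)))] at this

lemma phi_cross (x x' : X) (y y' : Y) :
    phi B * (B x' y * B x y') ≤ B x y * B x' y' := by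
  have h := phi_le B x x' y y'
  rw [le_div_iff₀ (mul_pos (hB _ _) (hB _ _))] at h
  exact h

end phi

/-- Birkhoff-type inequality for a pair of rows. -/
lemma pair_ineq {Y : Type} [Fintype Y] (p q x y : Y → ℝ)
    (hp : ∀ w, 0 < p w) (hq : ∀ w, 0 < q w) (hy : ∀ w, 0 < y w)
    (m M c : ℝ) (hm : 0 < m) (hmM : m ≤ M) (hc : 1 ≤ c)
    (hmy : ∀ w, m * y w ≤ x w) (hMy : ∀ w, x w ≤ M * y w)
    (hcr : ∀ w w', p w * q w' ≤ c * (q w * p w')) :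
    (M + m*c + 2*Real.sqrt (M*c*m)) * ((∑ w, p w * x w) * (∑ w, q w * y w)) ≤
    (M*c + m + 2*Real.sqrt (M*c*m)) * ((∑ w, q w * x w) * (∑ w, p w * y w)) := by
  set g := Real.sqrt (M*c*m) with hgdef
  have hMpos : 0 < M := lt_of_lt_of_le hm hmM
  have hg : 0 ≤ g := Real.sqrt_nonneg _
  have hg2 : g^2 = M*c*m := Real.sq_sqrt (by positivity)
  rcases eq_or_lt_of_le hmM with hMm | hMm
  · subst hMm
    have hxy : ∀ w, x w = m * y w := fun w => le_antisymm (hMy w) (hmy w)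
    have e1 : (∑ w, p w * x w) = m * ∑ w, p w * y w := by
      rw [Finset.mul_sum]; exact Finset.sum_congr rfl fun w _ => by rw [hxy w]; ring
    have e2 : (∑ w, q w * x w) = m * ∑ w, q w * y w := by
      rw [Finset.mul_sum]; exact Finset.sum_congr rfl fun w _ => by rw [hxy w]; ring
    rw [e1, e2]
    exact le_of_eq (by ring)
  · set a1 : Y → ℝ := fun w => x w - m * y w with ha1
    set a2 : Y → ℝ := fun w => M * y w - x w with ha2
    set A1 := ∑ w, p w * a1 w with hA1d
    set A2 := ∑ w, p w * a2 w with hA2d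
    set B1 := ∑ w, q w * a1 w with hB1d
    set B2 := ∑ w, q w * a2 w with hB2d
    have ha1n : ∀ w, 0 ≤ a1 w := fun w => sub_nonneg.2 (hmy w)
    have ha2n : ∀ w, 0 ≤ a2 w := fun w => sub_nonneg.2 (hMy w)
    have hA1 : 0 ≤ A1 := Finset.sum_nonneg fun w _ => mul_nonneg (hp w).le (ha1n w)
    have hA2 : 0 ≤ A2 := Finset.sum_nonneg fun w _ => mul_nonneg (hp w).le (ha2n w)
    have hB1 : 0 ≤ B1 := Finset.sum_nonneg fun w _ => mul_nonneg (hq w).le (ha1n w)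
    have hB2 : 0 ≤ B2 := Finset.sum_nonneg fun w _ => mul_nonneg (hq w).le (ha2n w)
    have hcon : A1*B2 ≤ c*(A2*B1) := by
      have hl : A1*B2 = ∑ i, ∑ j, (p i * a1 i) * (q j * a2 j) := Finset.sum_mul_sum _ _ _ _
      have hr : c*(A2*B1) = ∑ i, ∑ j, c * ((q i * a1 i) * (p j * a2 j)) := by
        rw [mul_comm A2 B1, Finset.sum_mul_sum, Finset.mul_sum]
        exact Finset.sum_congr rfl fun i _ => by rw [Finset.mul_sum]
      rw [hl, hr]
      apply Finset.sum_le_sum; intro i _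
      apply Finset.sum_le_sum; intro j _
      have := mul_le_mul_of_nonneg_right (hcr i j) (mul_nonneg (ha1n i) (ha2n j))
      nlinarith [this]
    have hcore := core_ineq m M c A1 A2 B1 B2 g hm hmM hc hA1 hA2 hB1 hB2 hg hg2 hcon
    have e1 : M*A1 + m*A2 = (M - m) * ∑ w, p w * x w := by
      rw [hA1d, hA2d, Finset.mul_sum, Finset.mul_sum, Finset.mul_sum, ← Finset.sum_add_distrib]
      exact Finset.sum_congr rfl fun w _ => by simp only [ha1, ha2]; ring
    have e2 : A1 + A2 = (M - m) * ∑ w, p w * y w := by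
      rw [hA1d, hA2d, Finset.mul_sum, ← Finset.sum_add_distrib]
      exact Finset.sum_congr rfl fun w _ => by simp only [ha1, ha2]; ring
    have e3 : M*B1 + m*B2 = (M - m) * ∑ w, q w * x w := by
      rw [hB1d, hB2d, Finset.mul_sum, Finset.mul_sum, Finset.mul_sum, ← Finset.sum_add_distrib]
      exact Finset.sum_congr rfl fun w _ => by simp only [ha1, ha2]; ring
    have e4 : B1 + B2 = (M - m) * ∑ w, q w * y w := by
      rw [hB1d, hB2d, Finset.mul_sum, ← Finset.sum_add_distrib]
      exact Finset.sum_congr rfl fun w _ => by simp only [ha1, ha2]; ring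
    rw [e1, e2, e3, e4] at hcore
    have hMm2 : (0:ℝ) < (M - m)^2 := by
      have : (0:ℝ) < M - m := sub_pos.2 hMm
      positivity
    apply le_of_mul_le_mul_left _ hMm2
    calc (M-m)^2 * ((M + m*c + 2*g) * ((∑ w, p w * x w) * ∑ w, q w * y w))
        = (M + m*c + 2*g) * (((M-m) * ∑ w, p w * x w) * ((M-m) * ∑ w, q w * y w)) := by ring
      _ ≤ (M*c + m + 2*g) * (((M-m) * ∑ w, q w * x w) * ((M-m) * ∑ w, p w * y w)) := hcore
      _ = (M-m)^2 * ((M*c + m + 2*g) * ((∑ w, q w * x w) * ∑ w, p w * y w)) := by ring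
section tstep

lemma t_step (Mn mn a b s : ℝ) (hmn : 0 < mn) (hMn : mn ≤ Mn) (hb : 0 < b) (hab : b ≤ a)
    (hs : 0 < s) (hkey : (s*a+b)^2 * Mn ≤ (a+s*b)^2 * mn) :
    (Real.sqrt Mn - Real.sqrt mn)/(Real.sqrt Mn + Real.sqrt mn)
      ≤ (1-s)/(1+s) * ((a-b)/(a+b)) := by
  have ha : 0 < a := lt_of_lt_of_le hb hab
  have hXpos : 0 < Real.sqrt Mn := Real.sqrt_pos.2 (lt_of_lt_of_le hmn hMn)
  have hYpos : 0 < Real.sqrt mn := Real.sqrt_pos.2 hmn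
  set X := Real.sqrt Mn with hX
  set Y := Real.sqrt mn with hY
  have hd1 : 0 < s*a+b := add_pos (mul_pos hs ha) hb
  have hd2 : 0 < a + s*b := add_pos ha (mul_pos hs hb)
  have h1 : (s*a+b)*X ≤ (a+s*b)*Y := by
    have e : Mn ≤ ((a+s*b)*Y/(s*a+b))^2 := by
      rw [div_pow, mul_pow, hY, Real.sq_sqrt hmn.le, le_div_iff₀ (by positivity)]
      calc Mn * (s*a+b)^2 = (s*a+b)^2 * Mn := by ring
        _ ≤ (a+s*b)^2 * mn := hkey
    have h2 := Real.sqrt_le_sqrt e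
    rw [← hX, Real.sqrt_sq (by positivity)] at h2
    calc (s*a+b)*X ≤ (s*a+b) * ((a+s*b)*Y/(s*a+b)) := mul_le_mul_of_nonneg_left h2 hd1.le
      _ = (a+s*b)*Y := by field_simp
  rw [div_mul_div_comm, div_le_div_iff₀ (by linarith) (by nlinarith)]
  nlinarith [h1]

end tstep

section sys

variable {L : ℕ → Type} [∀ n, Fintype (L n)] [∀ n, Nonempty (L n)]

lemma zero_up {A : ∀ n, L n → L (n+1) → ℝ} (hpos : ∀ n v w, 0 < A n v w)
    {ψ : ∀ n, L n → ℝ} (hψ : ψ ∈ InvLimit A) {n : ℕ} {v : L n}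
    (h : ψ n v = 0) : ∀ w, ψ (n+1) w = 0 := by
  intro w
  have hrel := hψ.2 n v
  rw [h] at hrel
  have h0 := (Finset.sum_eq_zero_iff_of_nonneg
    (fun w _ => mul_nonneg (hpos n v w).le (hψ.1 (n+1) w))).1 hrel.symm w (Finset.mem_univ w)
  exact (mul_eq_zero.1 h0).resolve_left (ne_of_gt (hpos n v w))

lemma level_zero_down (v0 : L 0) {A : ∀ n, L n → L (n+1) → ℝ}
    {ψ : ∀ n, L n → ℝ} (hψ : ψ ∈ InvLimit A) :
    ∀ m, (∀ w : L m, ψ m w = 0) → ψ 0 v0 = 0 := by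
  intro m
  induction m with
  | zero => intro h; exact h v0
  | succ k ih =>
    intro h
    apply ih
    intro w
    rw [hψ.2 k w]
    exact Finset.sum_eq_zero fun u _ => by rw [h u, mul_zero]

lemma pos_all (v0 : L 0) {A : ∀ n, L n → L (n+1) → ℝ} (hpos : ∀ n v w, 0 < A n v w)
    {ψ : ∀ n, L n → ℝ} (hψ : ψ ∈ InvLimit A) (h0 : 0 < ψ 0 v0) :
    ∀ n v, 0 < ψ n v := by
  intro n v
  rcases eq_or_lt_of_le (hψ.1 n v) with h | h
  · exfalso
    have hz := zero_up hpos hψ h.symm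
    exact absurd (level_zero_down v0 hψ (n+1) hz) (ne_of_gt h0)
  · exact h

lemma zero_all (v0 : L 0) (hsing : ∀ v : L 0, v = v0)
    {A : ∀ n, L n → L (n+1) → ℝ} (hpos : ∀ n v w, 0 < A n v w)
    {ψ : ∀ n, L n → ℝ} (hψ : ψ ∈ InvLimit A) (h0 : ψ 0 v0 = 0) :
    ∀ n v, ψ n v = 0 := by
  intro n
  induction n with
  | zero => intro v; rw [hsing v]; exact h0
  | succ k ih => exact zero_up hpos hψ (ih (Classical.arbitrary (L k)))

end sys
section uniq

variable {L : ℕ → Type} [∀ n, Fintype (L n)] [∀ n, Nonempty (L n)]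

/-- min ratio at level n -/
noncomputable def mmr (ψ ψ' : ∀ n, L n → ℝ) (n : ℕ) : ℝ :=
  Finset.univ.inf' Finset.univ_nonempty (fun v => ψ n v / ψ' n v)

noncomputable def MMr (ψ ψ' : ∀ n, L n → ℝ) (n : ℕ) : ℝ :=
  Finset.univ.sup' Finset.univ_nonempty (fun v => ψ n v / ψ' n v)

variable {ψ ψ' : ∀ n, L n → ℝ}

lemma mmr_pos (hψ : ∀ n v, 0 < ψ n v) (hψ' : ∀ n v, 0 < ψ' n v) (n : ℕ) :
    0 < mmr ψ ψ' n := by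
  unfold mmr
  exact (Finset.lt_inf'_iff _).2 fun v _ => div_pos (hψ n v) (hψ' n v)

lemma mmr_le (n : ℕ) (v : L n) : mmr ψ ψ' n ≤ ψ n v / ψ' n v := by
  unfold mmr; exact Finset.inf'_le (fun v => ψ n v / ψ' n v) (Finset.mem_univ v)

lemma le_MMr (n : ℕ) (v : L n) : ψ n v / ψ' n v ≤ MMr ψ ψ' n := by
  unfold MMr; exact Finset.le_sup' (fun v => ψ n v / ψ' n v) (Finset.mem_univ v)

lemma mmr_le_MMr (n : ℕ) : mmr ψ ψ' n ≤ MMr ψ ψ' n :=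
  le_trans (mmr_le n (Classical.arbitrary _)) (le_MMr n _)

lemma mmr_mul_le (hψ' : ∀ n v, 0 < ψ' n v) (n : ℕ) (v : L n) :
    mmr ψ ψ' n * ψ' n v ≤ ψ n v := by
  have := mmr_le (ψ := ψ) (ψ' := ψ') n v
  rwa [le_div_iff₀ (hψ' n v)] at this

lemma le_MMr_mul (hψ' : ∀ n v, 0 < ψ' n v) (n : ℕ) (v : L n) :
    ψ n v ≤ MMr ψ ψ' n * ψ' n v := by
  have := le_MMr (ψ := ψ) (ψ' := ψ') n v
  rwa [div_le_iff₀ (hψ' n v)] at this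

lemma MMr_pos (hψ : ∀ n v, 0 < ψ n v) (hψ' : ∀ n v, 0 < ψ' n v) (n : ℕ) :
    0 < MMr ψ ψ' n :=
  lt_of_lt_of_le (mmr_pos hψ hψ' n) (mmr_le_MMr n)

/-- the key cross inequality between consecutive levels -/
lemma cross_ineq {A : ∀ n, L n → L (n+1) → ℝ} (hpos : ∀ n v w, 0 < A n v w)
    (hψm : ψ ∈ InvLimit A) (hψm' : ψ' ∈ InvLimit A)
    (hψ : ∀ n v, 0 < ψ n v) (hψ' : ∀ n v, 0 < ψ' n v) (n : ℕ) :
    (Real.sqrt (phi (A n)) * Real.sqrt (MMr ψ ψ' (n+1)) + Real.sqrt (mmr ψ ψ' (n+1)))^2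
        * MMr ψ ψ' n
      ≤ (Real.sqrt (MMr ψ ψ' (n+1)) + Real.sqrt (phi (A n)) * Real.sqrt (mmr ψ ψ' (n+1)))^2
        * mmr ψ ψ' n := by
  set m := mmr ψ ψ' (n+1) with hmdef
  set M := MMr ψ ψ' (n+1) with hMdef
  have hm : 0 < m := mmr_pos hψ hψ' (n+1)
  have hM : 0 < M := MMr_pos hψ hψ' (n+1)
  have hmM : m ≤ M := mmr_le_MMr (n+1)
  have hphi : 0 < phi (A n) := phi_pos _ (hpos n)
  have hphi1 : phi (A n) ≤ 1 := phi_le_one _ (hpos n)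
  set s := Real.sqrt (phi (A n)) with hsdef
  have hs : 0 < s := Real.sqrt_pos.2 hphi
  have hs2 : s^2 = phi (A n) := Real.sq_sqrt hphi.le
  set c := (phi (A n))⁻¹ with hcdef
  have hc : 1 ≤ c := by
    rw [hcdef]
    exact (one_le_inv_iff₀.2 ⟨hphi, hphi1⟩)
  have hcs : c * s^2 = 1 := by rw [hcdef, hs2]; exact inv_mul_cancel₀ (ne_of_gt hphi)
  set a := Real.sqrt M with hadef
  set b := Real.sqrt m with hbdef
  have ha : 0 < a := Real.sqrt_pos.2 hM
  have hb : 0 < b := Real.sqrt_pos.2 hm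
  have ha2 : a^2 = M := Real.sq_sqrt hM.le
  have hb2 : b^2 = m := Real.sq_sqrt hm.le
  set g := Real.sqrt (M*c*m) with hgdef
  have hgeq : g = a*b/s := by
    rw [hgdef, show M*c*m = (a*b/s)^2 by
      rw [div_pow, mul_pow, ha2, hb2, hs2, hcdef]; field_simp]
    exact Real.sqrt_sq (by positivity)
  have hg' : g*s = a*b := by rw [hgeq]; field_simp
  -- attaining elements
  obtain ⟨u, -, hu0⟩ := Finset.exists_mem_eq_sup' (Finset.univ_nonempty (α := L n))
    (fun v => ψ n v / ψ' n v)
  obtain ⟨u', -, hu0'⟩ := Finset.exists_mem_eq_inf' (Finset.univ_nonempty (α := L n))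
    (fun v => ψ n v / ψ' n v)
  have hu : MMr ψ ψ' n = ψ n u / ψ' n u := hu0
  have hu' : mmr ψ ψ' n = ψ n u' / ψ' n u' := hu0'
  have hcr : ∀ w w', A n u w * A n u' w' ≤ c * (A n u' w * A n u w') := by
    intro w w'
    have h2 := phi_le (A n) u' u w w'
    rw [le_div_iff₀ (mul_pos (hpos n u w) (hpos n u' w'))] at h2
    rw [hcdef, inv_mul_eq_div, le_div_iff₀ hphi]
    nlinarith [h2]
  have hP := pair_ineq (A n u) (A n u') (ψ (n+1)) (ψ' (n+1))
    (hpos n u) (hpos n u') (hψ' (n+1)) m M c hm hmM hc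
    (fun w => mmr_mul_le hψ' (n+1) w) (fun w => le_MMr_mul hψ' (n+1) w) hcr
  rw [← hψm.2 n u, ← hψm.2 n u', ← hψm'.2 n u, ← hψm'.2 n u'] at hP
  have hqu : ψ n u = MMr ψ ψ' n * ψ' n u := by
    rw [hu]
    exact (div_mul_cancel₀ _ (ne_of_gt (hψ' n u))).symm
  have hqu' : ψ n u' = mmr ψ ψ' n * ψ' n u' := by
    rw [hu']
    exact (div_mul_cancel₀ _ (ne_of_gt (hψ' n u'))).symm
  have hprod : 0 < ψ' n u * ψ' n u' := mul_pos (hψ' n u) (hψ' n u')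
  have hcancel : (M + m*c + 2*g) * MMr ψ ψ' n ≤ (M*c + m + 2*g) * mmr ψ ψ' n := by
    apply le_of_mul_le_mul_right _ hprod
    calc (M + m*c + 2*g) * MMr ψ ψ' n * (ψ' n u * ψ' n u')
        = (M + m*c + 2*g) * ((MMr ψ ψ' n * ψ' n u) * ψ' n u') := by ring
      _ = (M + m*c + 2*g) * (ψ n u * ψ' n u') := by rw [← hqu]
      _ ≤ (M*c + m + 2*g) * (ψ n u' * ψ' n u) := hP
      _ = (M*c + m + 2*g) * ((mmr ψ ψ' n * ψ' n u') * ψ' n u) := by rw [← hqu']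
      _ = (M*c + m + 2*g) * mmr ψ ψ' n * (ψ' n u * ψ' n u') := by ring
  have e1 : s^2*(M + m*c + 2*g) = (s*a+b)^2 := by
    linear_combination (-(s^2))*ha2 + m*hcs + (-1)*hb2 + (2*s)*hg'
  have e2 : s^2*(M*c + m + 2*g) = (a+s*b)^2 := by
    linear_combination M*hcs + (-1)*ha2 + (-(s^2))*hb2 + (2*s)*hg'
  calc (s*a+b)^2 * MMr ψ ψ' n = s^2*((M + m*c + 2*g) * MMr ψ ψ' n) := by rw [← e1]; ring
    _ ≤ s^2*((M*c + m + 2*g) * mmr ψ ψ' n) := mul_le_mul_of_nonneg_left hcancel (sq_nonneg s)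
    _ = (a+s*b)^2 * mmr ψ ψ' n := by rw [← e2]; ring

end uniq
section chain

variable {L : ℕ → Type} [∀ n, Fintype (L n)] [∀ n, Nonempty (L n)]

theorem eq_of_same_top (v0 : L 0) (hsing : ∀ v : L 0, v = v0)
    {A : ∀ n, L n → L (n+1) → ℝ} (hpos : ∀ n v w, 0 < A n v w)
    (hdiv : ¬ Summable (fun n => Real.sqrt (phi (A n))))
    {ψ ψ' : ∀ n, L n → ℝ} (hψm : ψ ∈ InvLimit A) (hψm' : ψ' ∈ InvLimit A)
    (hψ : ∀ n v, 0 < ψ n v) (hψ' : ∀ n v, 0 < ψ' n v)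
    (h0 : ψ 0 v0 = ψ' 0 v0) : ψ = ψ' := by
  set sq : ℕ → ℝ := fun n => Real.sqrt (phi (A n)) with hsqdef
  have hsqpos : ∀ n, 0 < sq n := fun n => Real.sqrt_pos.2 (phi_pos _ (hpos n))
  have hsqle : ∀ n, sq n ≤ 1 := fun n => by
    rw [hsqdef, show (1:ℝ) = Real.sqrt 1 by rw [Real.sqrt_one]]
    exact Real.sqrt_le_sqrt (phi_le_one _ (hpos n))
  set t : ℕ → ℝ := fun n =>
    (Real.sqrt (MMr ψ ψ' n) - Real.sqrt (mmr ψ ψ' n)) /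
      (Real.sqrt (MMr ψ ψ' n) + Real.sqrt (mmr ψ ψ' n)) with htdef
  set κ : ℕ → ℝ := fun n => (1 - sq n)/(1 + sq n) with hκdef
  have hmmrpos : ∀ n, 0 < mmr ψ ψ' n := mmr_pos hψ hψ'
  have hMMrpos : ∀ n, 0 < MMr ψ ψ' n := MMr_pos hψ hψ'
  have hsqmm : ∀ n, 0 < Real.sqrt (mmr ψ ψ' n) := fun n => Real.sqrt_pos.2 (hmmrpos n)
  have hsqMM : ∀ n, Real.sqrt (mmr ψ ψ' n) ≤ Real.sqrt (MMr ψ ψ' n) :=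
    fun n => Real.sqrt_le_sqrt (mmr_le_MMr n)
  have hstep : ∀ n, t n ≤ κ n * t (n+1) := by
    intro n
    exact t_step (MMr ψ ψ' n) (mmr ψ ψ' n) (Real.sqrt (MMr ψ ψ' (n+1)))
      (Real.sqrt (mmr ψ ψ' (n+1))) (sq n) (hmmrpos n) (mmr_le_MMr n)
      (hsqmm (n+1)) (hsqMM (n+1)) (hsqpos n)
      (cross_ineq hpos hψm hψm' hψ hψ' n)
  have hκ0 : ∀ n, 0 ≤ κ n := fun n =>
    div_nonneg (by linarith [hsqle n]) (by linarith [(hsqpos n)])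
  have hκe : ∀ n, κ n ≤ Real.exp (-(sq n)) := by
    intro n
    have h1 : κ n ≤ 1 - sq n := by
      rw [hκdef, div_le_iff₀ (by linarith [hsqpos n])]
      nlinarith [hsqpos n, hsqle n]
    have h2 : 1 - sq n ≤ Real.exp (-(sq n)) := by
      have := Real.add_one_le_exp (-(sq n))
      linarith
    linarith
  have ht1 : ∀ n, t n ≤ 1 := by
    intro n
    rw [htdef, div_le_one (by linarith [hsqmm n, lt_of_lt_of_le (hsqmm n) (hsqMM n)])]
    linarith [hsqmm n]
  have ht0 : ∀ n, 0 ≤ t n := fun n =>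
    div_nonneg (by linarith [hsqMM n]) (by linarith [hsqmm n, lt_of_lt_of_le (hsqmm n) (hsqMM n)])
  have hchain : ∀ k d, t k ≤ (∏ j ∈ Finset.Ico k (k+d), κ j) * t (k+d) := by
    intro k d
    induction d with
    | zero => simp
    | succ d ih =>
      have hprod : 0 ≤ ∏ j ∈ Finset.Ico k (k+d), κ j :=
        Finset.prod_nonneg fun j _ => hκ0 j
      calc t k ≤ (∏ j ∈ Finset.Ico k (k+d), κ j) * t (k+d) := ih
        _ ≤ (∏ j ∈ Finset.Ico k (k+d), κ j) * (κ (k+d) * t (k+d+1)) :=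
            mul_le_mul_of_nonneg_left (hstep (k+d)) hprod
        _ = (∏ j ∈ Finset.Ico k (k+d+1), κ j) * t (k+d+1) := by
            rw [Finset.prod_Ico_succ_top (Nat.le_add_right k d)]; ring
  have hbound : ∀ k d, t k ≤ Real.exp (-(∑ j ∈ Finset.Ico k (k+d), sq j)) := by
    intro k d
    have h1 : t k ≤ ∏ j ∈ Finset.Ico k (k+d), κ j := by
      have := hchain k d
      have hprod : 0 ≤ ∏ j ∈ Finset.Ico k (k+d), κ j :=
        Finset.prod_nonneg fun j _ => hκ0 j
      nlinarith [ht1 (k+d), ht0 (k+d)]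
    have h2 : (∏ j ∈ Finset.Ico k (k+d), κ j) ≤ ∏ j ∈ Finset.Ico k (k+d), Real.exp (-(sq j)) :=
      Finset.prod_le_prod (fun j _ => hκ0 j) (fun j _ => hκe j)
    have h3 : (∏ j ∈ Finset.Ico k (k+d), Real.exp (-(sq j)))
        = Real.exp (∑ j ∈ Finset.Ico k (k+d), -(sq j)) := (Real.exp_sum _ _).symm
    rw [Finset.sum_neg_distrib] at h3
    linarith [h1, h2, le_of_eq h3]
  -- divergence: partial sums tend to infinity
  set S : ℕ → ℝ := fun n => ∑ j ∈ Finset.range n, sq j with hSdef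
  have hS : Filter.Tendsto S Filter.atTop Filter.atTop :=
    (not_summable_iff_tendsto_nat_atTop_of_nonneg (fun j => Real.sqrt_nonneg _)).1 hdiv
  have htzero : ∀ k, t k = 0 := by
    intro k
    have hlim : Filter.Tendsto (fun n => Real.exp (S k - S n)) Filter.atTop (nhds 0) := by
      apply Real.tendsto_exp_atBot.comp
      have h1 : Filter.Tendsto (fun n => -S n) Filter.atTop Filter.atBot :=
        Filter.tendsto_neg_atBot_iff.2 hS
      have := Filter.tendsto_atBot_add_const_left Filter.atTop (S k) h1
      simpa [sub_eq_add_neg] using this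
    have hev : ∀ᶠ n in Filter.atTop, t k ≤ Real.exp (S k - S n) := by
      rw [Filter.eventually_atTop]
      refine ⟨k, fun n hn => ?_⟩
      have hb := hbound k (n - k)
      rw [Nat.add_sub_cancel' hn] at hb
      rw [Finset.sum_Ico_eq_sub _ hn] at hb
      calc t k ≤ Real.exp (-(S n - S k)) := hb
        _ = Real.exp (S k - S n) := by ring_nf
    exact le_antisymm (ge_of_tendsto hlim hev) (ht0 k)
  have hMm : ∀ k, MMr ψ ψ' k = mmr ψ ψ' k := by
    intro k
    have h1 := htzero k
    rw [htdef] at h1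
    have hden : 0 < Real.sqrt (MMr ψ ψ' k) + Real.sqrt (mmr ψ ψ' k) := by
      linarith [hsqmm k, lt_of_lt_of_le (hsqmm k) (hsqMM k)]
    have h2 : Real.sqrt (MMr ψ ψ' k) = Real.sqrt (mmr ψ ψ' k) := by
      have := (div_eq_zero_iff.1 h1).resolve_right (ne_of_gt hden)
      linarith
    calc MMr ψ ψ' k = Real.sqrt (MMr ψ ψ' k) ^ 2 := (Real.sq_sqrt (hMMrpos k).le).symm
      _ = Real.sqrt (mmr ψ ψ' k) ^ 2 := by rw [h2]
      _ = mmr ψ ψ' k := Real.sq_sqrt (hmmrpos k).le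
  have heq : ∀ k v, ψ k v = mmr ψ ψ' k * ψ' k v := by
    intro k v
    refine le_antisymm ?_ (mmr_mul_le hψ' k v)
    have := le_MMr_mul (ψ := ψ) hψ' k v
    rwa [hMm k] at this
  have hmstep : ∀ k, mmr ψ ψ' k = mmr ψ ψ' (k+1) := by
    intro k
    have v := Classical.arbitrary (L k)
    have e : ψ k v = mmr ψ ψ' (k+1) * ψ' k v := by
      calc ψ k v = ∑ w, A k v w * ψ (k+1) w := hψm.2 k v
        _ = ∑ w, A k v w * (mmr ψ ψ' (k+1) * ψ' (k+1) w) := by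
            exact Finset.sum_congr rfl fun w _ => by rw [heq (k+1) w]
        _ = mmr ψ ψ' (k+1) * ∑ w, A k v w * ψ' (k+1) w := by
            rw [Finset.mul_sum]; exact Finset.sum_congr rfl fun w _ => by ring
        _ = mmr ψ ψ' (k+1) * ψ' k v := by rw [← hψm'.2 k v]
    have e2 := heq k v
    exact mul_right_cancel₀ (ne_of_gt (hψ' k v)) (e2.symm.trans e)
  have hm0 : mmr ψ ψ' 0 = 1 := by
    unfold mmr
    rw [show (fun v => ψ 0 v / ψ' 0 v) = fun _ : L 0 => (1:ℝ) from funext fun v => by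
      rw [hsing v, h0]; exact div_self (ne_of_gt (hψ' 0 v0))]
    exact Finset.inf'_const _ _
  have hall : ∀ k, mmr ψ ψ' k = 1 := by
    intro k
    induction k with
    | zero => exact hm0
    | succ k ih => rw [← hmstep k]; exact ih
  funext k v
  rw [heq k v, hall k, one_mul]

end chain
section seg

variable {L : ℕ → Type} [∀ n, Fintype (L n)] [∀ n, Nonempty (L n)]

open Classical in
noncomputable def seg (A : ∀ n, L n → L (n+1) → ℝ) (k : ℕ) : ∀ m, L k → L m → ℝ
  | 0, v, w => if h : k = 0 then (if h ▸ v = w then 1 else 0) else 0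
  | (m+1), v, w => if h : k = m+1 then (if h ▸ v = w then 1 else 0)
      else ∑ u, seg A k m v u * A m u w

open Classical in
lemma seg_self (A : ∀ n, L n → L (n+1) → ℝ) (k : ℕ) (v w : L k) :
    seg A k k v w = if v = w then 1 else 0 := by
  cases k with
  | zero => simp [seg]
  | succ m => simp [seg]

lemma seg_succ (A : ∀ n, L n → L (n+1) → ℝ) {k m : ℕ} (h : k ≤ m) (v : L k) (w : L (m+1)) :
    seg A k (m+1) v w = ∑ u, seg A k m v u * A m u w := by
  rw [seg, dif_neg (by omega)]

lemma seg_nonneg (A : ∀ n, L n → L (n+1) → ℝ) (hA : ∀ n v w, 0 ≤ A n v w)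
    (k m : ℕ) (v : L k) (w : L m) : 0 ≤ seg A k m v w := by
  induction m with
  | zero =>
    rw [seg]
    split
    · split <;> norm_num
    · exact le_refl _
  | succ m ih =>
    rw [seg]
    split
    · split <;> norm_num
    · exact Finset.sum_nonneg fun u _ => mul_nonneg (ih u) (hA m u w)

lemma pathMat_eq_seg (A : ∀ n, L n → L (n+1) → ℝ) (k : ℕ) (v : L 0) (w : L k) :
    pathMat A k v w = seg A 0 k v w := by
  induction k with
  | zero => rw [pathMat, seg]; simp
  | succ k ih =>
    rw [pathMat, seg_succ A (Nat.zero_le k)]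
    exact Finset.sum_congr rfl fun u _ => by rw [ih]

lemma seg_left (A : ∀ n, L n → L (n+1) → ℝ) {k m : ℕ} (h : k < m) (v : L k) (w : L m) :
    seg A k m v w = ∑ u, A k v u * seg A (k+1) m u w := by
  classical
  induction m with
  | zero => omega
  | succ m ih =>
    rcases Nat.lt_or_ge k m with hkm | hkm
    · rw [seg_succ A (by omega)]
      have e : ∀ u, seg A k m v u = ∑ x, A k v x * seg A (k+1) m x u := fun u => ih hkm u
      calc (∑ u, seg A k m v u * A m u w)
          = ∑ u, ∑ x, (A k v x * seg A (k+1) m x u) * A m u w := by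
            refine Finset.sum_congr rfl fun u _ => ?_
            rw [e u, Finset.sum_mul]
        _ = ∑ x, ∑ u, (A k v x * seg A (k+1) m x u) * A m u w := Finset.sum_comm
        _ = ∑ x, A k v x * seg A (k+1) (m+1) x w := by
            refine Finset.sum_congr rfl fun x _ => ?_
            rw [seg_succ A (by omega), Finset.mul_sum]
            exact Finset.sum_congr rfl fun u _ => by ring
    · have hk : k = m := by omega
      subst hk
      rw [seg_succ A (le_refl k)]
      calc (∑ u, seg A k k v u * A k u w)
          = ∑ u, (if v = u then (1:ℝ) else 0) * A k u w := by
            refine Finset.sum_congr rfl fun u _ => by rw [seg_self]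
        _ = A k v w := by simp
        _ = ∑ u, A k v u * seg A (k+1) (k+1) u w := by
            rw [show (∑ u, A k v u * seg A (k+1) (k+1) u w)
                = ∑ u, A k v u * (if u = w then (1:ℝ) else 0) from
              Finset.sum_congr rfl fun u _ => by rw [seg_self]]
            simp

lemma chapman (A : ∀ n, L n → L (n+1) → ℝ) (v0 : L 0) {k n : ℕ} (h : k ≤ n) (w : L n) :
    seg A 0 n v0 w = ∑ v, seg A 0 k v0 v * seg A k n v w := by
  classical
  induction n with
  | zero =>
    have hk : k = 0 := by omega
    subst hk
    rw [show (∑ v, seg A 0 0 v0 v * seg A 0 0 v w)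
        = ∑ v, seg A 0 0 v0 v * (if v = w then (1:ℝ) else 0) from
      Finset.sum_congr rfl fun v _ => by rw [seg_self A 0 v w]]
    simp
  | succ n ih =>
    rcases Nat.lt_or_ge k (n+1) with hkn | hkn
    · have hkn' : k ≤ n := by omega
      rw [seg_succ A (Nat.zero_le n)]
      calc (∑ u, seg A 0 n v0 u * A n u w)
          = ∑ u, ∑ v, (seg A 0 k v0 v * seg A k n v u) * A n u w := by
            refine Finset.sum_congr rfl fun u _ => by rw [ih hkn' u, Finset.sum_mul]
        _ = ∑ v, ∑ u, (seg A 0 k v0 v * seg A k n v u) * A n u w := Finset.sum_comm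
        _ = ∑ v, seg A 0 k v0 v * seg A k (n+1) v w := by
            refine Finset.sum_congr rfl fun v _ => ?_
            rw [seg_succ A hkn', Finset.mul_sum]
            exact Finset.sum_congr rfl fun u _ => by ring
    · have hk : k = n+1 := by omega
      subst hk
      rw [show (∑ v, seg A 0 (n+1) v0 v * seg A (n+1) (n+1) v w)
          = ∑ v, seg A 0 (n+1) v0 v * (if v = w then (1:ℝ) else 0) from
        Finset.sum_congr rfl fun v _ => by rw [seg_self]]
      simp

end seg
section exist

open Filter Topology

variable {L : ℕ → Type} [∀ n, Fintype (L n)] [∀ n, Nonempty (L n)]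

lemma pathMat_pos (v0 : L 0) {A : ∀ n, L n → L (n+1) → ℝ} (hA : IsProjSystem v0 A) :
    ∀ k (w : L k), 0 < pathMat A k v0 w := by
  intro k w
  have h1 : 0 ≤ pathMat A k v0 w := by
    rw [pathMat_eq_seg]
    exact seg_nonneg A hA.1 0 k v0 w
  exact lt_of_le_of_ne h1 (Ne.symm (hA.2 k w))

lemma exists_top_one (v0 : L 0) {A : ∀ n, L n → L (n+1) → ℝ} (hA : IsProjSystem v0 A) :
    ∃ χ ∈ InvLimit A, χ 0 v0 = 1 := by
  classical
  set u : ∀ n, L n := fun n => Classical.arbitrary _ with hu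
  set D : ℕ → ℝ := fun n => pathMat A n v0 (u n) with hD
  have hDpos : ∀ n, 0 < D n := fun n => pathMat_pos v0 hA n (u n)
  set χ : ℕ → ∀ k, L k → ℝ :=
    fun n k v => if _ : k ≤ n then seg A k n v (u n) / D n else 0 with hχ
  set T : Set (∀ k, L k → ℝ) :=
    Set.univ.pi (fun k => Set.univ.pi fun v => Set.Icc 0 (1 / pathMat A k v0 v)) with hT
  have hTcomp : IsCompact T :=
    isCompact_univ_pi fun k => isCompact_univ_pi fun v => isCompact_Icc
  have hkey : ∀ n k (v : L k), k ≤ n → pathMat A k v0 v * seg A k n v (u n) ≤ D n := by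
    intro n k v hkn
    have hgoal : D n = ∑ v', seg A 0 k v0 v' * seg A k n v' (u n) := by
      rw [hD]; simp only
      rw [pathMat_eq_seg]; exact chapman A v0 hkn (u n)
    rw [hgoal, pathMat_eq_seg]
    exact Finset.single_le_sum
      (f := fun v' => seg A 0 k v0 v' * seg A k n v' (u n))
      (fun v' _ => mul_nonneg (seg_nonneg A hA.1 _ _ _ _) (seg_nonneg A hA.1 _ _ _ _))
      (Finset.mem_univ v)
  have hχnonneg : ∀ n k v, 0 ≤ χ n k v := by
    intro n k v
    rw [hχ]; simp only
    split
    · exact div_nonneg (seg_nonneg A hA.1 _ _ _ _) (hDpos n).le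
    · exact le_refl 0
  have hmem : ∀ n, χ n ∈ T := by
    intro n
    rw [hT, Set.mem_pi]
    intro k _
    rw [Set.mem_pi]
    intro v _
    refine ⟨hχnonneg n k v, ?_⟩
    rw [hχ]; simp only
    split
    case isTrue h =>
      rw [div_le_div_iff₀ (hDpos n) (pathMat_pos v0 hA k v), one_mul]
      calc seg A k n v (u n) * pathMat A k v0 v
          = pathMat A k v0 v * seg A k n v (u n) := by ring
        _ ≤ D n := hkey n k v h
    case isFalse h => exact div_nonneg zero_le_one (pathMat_pos v0 hA k v).le
  have hχ0 : ∀ n, χ n 0 v0 = 1 := by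
    intro n
    rw [hχ]; simp only
    rw [dif_pos (Nat.zero_le n), ← pathMat_eq_seg]
    exact div_self (ne_of_gt (hDpos n))
  have hχrel : ∀ n k, k + 1 ≤ n → ∀ v, χ n k v = ∑ w, A k v w * χ n (k+1) w := by
    intro n k hkn v
    rw [hχ]; simp only
    rw [dif_pos (by omega : k ≤ n)]
    rw [seg_left A (by omega : k < n), Finset.sum_div]
    refine Finset.sum_congr rfl fun w _ => ?_
    rw [dif_pos hkn, mul_div_assoc]
  obtain ⟨ψs, hψsT, φ, hφmono, hφtend⟩ := hTcomp.tendsto_subseq hmem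
  have hψsnonneg : ∀ k v, 0 ≤ ψs k v := by
    intro k v
    have := hψsT
    rw [hT, Set.mem_pi] at this
    have h2 := this k (Set.mem_univ k)
    rw [Set.mem_pi] at h2
    exact (h2 v (Set.mem_univ v)).1
  have hcont : ∀ (k : ℕ) (v : L k),
      Continuous (fun f : ∀ k, L k → ℝ => f k v - ∑ w, A k v w * f (k+1) w) := by
    intro k v
    apply Continuous.sub
    · exact (continuous_apply v).comp (continuous_apply k)
    · refine continuous_finset_sum _ fun w _ => Continuous.mul continuous_const ?_
      have h2 : Continuous (fun f : ∀ k, L k → ℝ => f (k+1)) := continuous_apply (k+1)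
      exact (continuous_apply w).comp h2
  have hrel : ∀ k v, ψs k v = ∑ w, A k v w * ψs (k+1) w := by
    intro k v
    have h1 : Tendsto (fun i => χ (φ i) k v - ∑ w, A k v w * χ (φ i) (k+1) w)
        atTop (𝓝 (ψs k v - ∑ w, A k v w * ψs (k+1) w)) :=
      ((hcont k v).tendsto ψs).comp hφtend
    have h2 : ∀ᶠ i in atTop, (fun i => χ (φ i) k v - ∑ w, A k v w * χ (φ i) (k+1) w) i = 0 := by
      rw [eventually_atTop]
      refine ⟨k+1, fun i hi => ?_⟩
      have hφi : k + 1 ≤ φ i := le_trans hi (hφmono.le_apply)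
      show χ (φ i) k v - ∑ w, A k v w * χ (φ i) (k+1) w = 0
      rw [hχrel (φ i) k hφi v]
      ring
    have h3 : Tendsto (fun i => χ (φ i) k v - ∑ w, A k v w * χ (φ i) (k+1) w) atTop (𝓝 0) :=
      Tendsto.congr' (EventuallyEq.symm h2) tendsto_const_nhds
    have := tendsto_nhds_unique h1 h3
    linarith
  have htop : ψs 0 v0 = 1 := by
    have hc : Continuous (fun f : ∀ k, L k → ℝ => f 0 v0) := by
      have h2 : Continuous (fun f : ∀ k, L k → ℝ => f 0) := continuous_apply 0
      exact (continuous_apply v0).comp h2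
    have h1 : Tendsto (fun i => χ (φ i) 0 v0) atTop (𝓝 (ψs 0 v0)) :=
      (hc.tendsto ψs).comp hφtend
    have h2 : Tendsto (fun i => χ (φ i) 0 v0) atTop (𝓝 1) := by
      have : (fun i => χ (φ i) 0 v0) = fun _ => 1 := funext fun i => hχ0 (φ i)
      rw [this]; exact tendsto_const_nhds
    exact tendsto_nhds_unique h1 h2
  exact ⟨ψs, ⟨hψsnonneg, hrel⟩, htop⟩

end exist
/-- Lemma 3.2: if the matrices have strictly positive entries and
`∑_j √(φ(A^(j))) = ∞`, then the top-coordinate map is an affine homeomorphism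
from the inverse limit onto `[0,∞)`. -/
theorem stmt_2 {L : ℕ → Type} [∀ n, Fintype (L n)] [∀ n, Nonempty (L n)]
    (v0 : L 0) (hsing : ∀ v : L 0, v = v0)
    (A : ∀ n, L n → L (n+1) → ℝ) (hA : IsProjSystem v0 A)
    (hpos : ∀ n v w, 0 < A n v w)
    (hdiv : ¬ Summable (fun n => Real.sqrt (phi (A n)))) :
    ∃ e : ↥(InvLimit A) ≃ₜ ↥(Set.Ici (0 : ℝ)),
      ∀ ψ : ↥(InvLimit A), (e ψ : ℝ) = (ψ : ∀ n, L n → ℝ) 0 v0 := by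
  obtain ⟨χ, hχm, hχ1⟩ := exists_top_one v0 hA
  have hχpos : ∀ n v, 0 < χ n v :=
    pos_all v0 hpos hχm (by rw [hχ1]; norm_num)
  have hscale : ∀ t : ℝ, 0 ≤ t → (fun k v => t * χ k v) ∈ InvLimit A := by
    intro t ht
    refine ⟨fun n v => mul_nonneg ht (hχm.1 n v), fun n v => ?_⟩
    show t * χ n v = ∑ w, A n v w * (t * χ (n+1) w)
    rw [hχm.2 n v, Finset.mul_sum]
    exact Finset.sum_congr rfl fun w _ => by ring
  have huniq : ∀ ψ, ψ ∈ InvLimit A → ψ = fun k v => (ψ 0 v0) * χ k v := by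
    intro ψ hψ
    rcases eq_or_lt_of_le (hψ.1 0 v0) with h | h
    · funext k v
      rw [zero_all v0 hsing hpos hψ h.symm k v, ← h, zero_mul]
    · refine eq_of_same_top v0 hsing hpos hdiv hψ (hscale _ (hψ.1 0 v0)) ?_ ?_ ?_
      · exact pos_all v0 hpos hψ h
      · exact pos_all v0 hpos (hscale _ (hψ.1 0 v0)) (by simpa [hχ1] using h)
      · simp [hχ1]
  let E : ↥(InvLimit A) ≃ ↥(Set.Ici (0 : ℝ)) :=
    { toFun := fun ψ => ⟨ψ.1 0 v0, Set.mem_Ici.2 (ψ.2.1 0 v0)⟩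
      invFun := fun t => ⟨fun k v => t.1 * χ k v, hscale t.1 (Set.mem_Ici.1 t.2)⟩
      left_inv := fun ψ => Subtype.ext (huniq ψ.1 ψ.2).symm
      right_inv := fun t => Subtype.ext (by simp [hχ1]) }
  refine ⟨{ toEquiv := E, continuous_toFun := ?_, continuous_invFun := ?_ }, fun ψ => rfl⟩
  · apply Continuous.subtype_mk
    have h0 : Continuous (fun f : ∀ k, L k → ℝ => f 0 v0) := by
      have h2 : Continuous (fun f : ∀ k, L k → ℝ => f 0) := continuous_apply 0
      exact (continuous_apply v0).comp h2
    exact h0.comp continuous_subtype_val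
  · apply Continuous.subtype_mk
    exact continuous_pi fun k => continuous_pi fun v =>
      Continuous.mul (continuous_subtype_val) continuous_const
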